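/- In the free bialgebra B = k⟨g,x⟩, the (n+1)-st Sweedler power of g^i x^j equals Σ over tuples (k_1,...,k_n) with 0 ≤ k_1+···+k_n ≤ j of the product g^i C_{k_1+···+k_n, j-(k_1+···+k_n)} · g^i C_{k_1+···+k_{n-1}, k_n} ··· g^i C_{k_1,k_2} · g^i C_{0,k_1}. -/

import Mathlib

open FreeAlgebra

variable (kk : Type) [Field kk]

/-- The free algebra `B = k⟨g,x⟩` on two generators. -/
abbrev FreeBi (kk : Type) [Field kk] := FreeAlgebra kk (Fin 2)

/-- The generator `g`. -/
noncomputable def gB : FreeBi kk := FreeAlgebra.ι kk 0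

/-- The generator `x`. -/
noncomputable def xB : FreeBi kk := FreeAlgebra.ι kk 1

/-- The monomial (word) associated to a function `f : Fin n → Fin 2`. -/
noncomputable def wordB {n : ℕ} (f : Fin n → Fin 2) : FreeBi kk :=
  (List.ofFn fun i => FreeAlgebra.ι kk (f i)).prod

/-- `CB a b` is the sum of all monomials with `a` occurrences of `g` and `b`
occurrences of `x`. -/
noncomputable def CB (a b : ℕ) : FreeBi kk :=
  ∑ f ∈ Finset.univ.filter
      (fun f : Fin (a + b) → Fin 2 => (Finset.univ.filter (fun i => f i = 0)).card = a),
    wordB kk f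

open TensorProduct in
/-- The comultiplication of the free bialgebra, determined by
`Δ(g) = g ⊗ g` and `Δ(x) = x ⊗ 1 + g ⊗ x`. -/
noncomputable def DeltaB : FreeBi kk →ₐ[kk] FreeBi kk ⊗[kk] FreeBi kk :=
  FreeAlgebra.lift kk
    (fun i => if i = 0 then gB kk ⊗ₜ[kk] gB kk else xB kk ⊗ₜ[kk] 1 + gB kk ⊗ₜ[kk] xB kk)

/-- The counit of the free bialgebra: `ε(g) = 1`, `ε(x) = 0`. -/
noncomputable def epsB : FreeBi kk →ₐ[kk] kk :=
  FreeAlgebra.lift kk (fun i => if i = 0 then (1 : kk) else 0)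

open TensorProduct in
/-- The `n`-th Sweedler power map `h ↦ h^{[n]} = m^{(n)} ∘ Δ^{(n)}(h)`, with
`h^{[0]} = ε(h)·1` and `h^{[1]} = h`. -/
noncomputable def PswB : ℕ → FreeBi kk →ₗ[kk] FreeBi kk
  | 0 => (Algebra.linearMap kk (FreeBi kk)) ∘ₗ (epsB kk).toLinearMap
  | 1 => LinearMap.id
  | (n + 2) =>
      (LinearMap.mul' kk (FreeBi kk)) ∘ₗ
        (TensorProduct.map (PswB (n + 1)) LinearMap.id) ∘ₗ (DeltaB kk).toLinearMap

/-- `partialSum K m = k_1 + ⋯ + k_m` for a tuple `K = (k_1, …, k_n)`. -/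
def partialSum {n : ℕ} (K : Fin n → ℕ) (m : ℕ) : ℕ :=
  ∑ t : Fin n, if (t : ℕ) < m then K t else 0

noncomputable def SB (m a : ℕ) : FreeBi kk :=
  ∑ f : Fin m → Fin 2,
    if (Finset.univ.filter (fun i => f i = 0)).card = a then wordB kk f else 0

lemma CB_eq_SB (a b : ℕ) : CB kk a b = SB kk (a + b) a := by
  rw [CB, SB, Finset.sum_filter]

lemma wordB_cons {n : ℕ} (v : Fin 2) (f : Fin n → Fin 2) :
    wordB kk (Fin.cons v f) = FreeAlgebra.ι kk v * wordB kk f := by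
  simp [wordB, List.ofFn_succ]

lemma count_cons {n : ℕ} (v : Fin 2) (f : Fin n → Fin 2) :
    (Finset.univ.filter (fun i : Fin (n+1) => (Fin.cons v f : Fin (n+1) → Fin 2) i = 0)).card
      = (if v = 0 then 1 else 0) + (Finset.univ.filter (fun i => f i = 0)).card := by
  rw [Finset.card_filter, Finset.card_filter, Fin.sum_univ_succ]
  simp

lemma SB_split (m a : ℕ) :
    SB kk (m + 1) a
      = (∑ f : Fin m → Fin 2,
          if 1 + (Finset.univ.filter (fun i => f i = 0)).card = a
          then gB kk * wordB kk f else 0)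
      + (∑ f : Fin m → Fin 2,
          if (Finset.univ.filter (fun i => f i = 0)).card = a
          then xB kk * wordB kk f else 0) := by
  rw [SB, ← Equiv.sum_comp (Fin.consEquiv (fun _ => Fin 2)), Fintype.sum_prod_type,
    Fin.sum_univ_two]
  simp only [Fin.consEquiv_apply, count_cons, wordB_cons]
  simp only [Fin.consEquiv, Equiv.coe_fn_mk, wordB_cons, gB, xB]
  norm_num

lemma SB_succ_succ (m a : ℕ) :
    SB kk (m + 1) (a + 1) = gB kk * SB kk m a + xB kk * SB kk m (a + 1) := by
  rw [SB_split, SB, SB, Finset.mul_sum, Finset.mul_sum]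
  congr 1
  · refine Finset.sum_congr rfl fun f _ => ?_
    rw [mul_ite, mul_zero]
    congr 1
    simp only [eq_iff_iff]
    omega
  · refine Finset.sum_congr rfl fun f _ => ?_
    rw [mul_ite, mul_zero]

lemma SB_succ_zero (m : ℕ) :
    SB kk (m + 1) 0 = xB kk * SB kk m 0 := by
  rw [SB_split, SB, Finset.mul_sum]
  have : (∑ f : Fin m → Fin 2,
      if 1 + (Finset.univ.filter (fun i => f i = 0)).card = 0
      then gB kk * wordB kk f else 0) = 0 := by
    apply Finset.sum_eq_zero; intro f _; simp
  rw [this, zero_add]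
  refine Finset.sum_congr rfl fun f _ => ?_
  rw [mul_ite, mul_zero]

lemma SB_zero_zero : SB kk 0 0 = 1 := by
  rw [SB]
  haveI : Unique (Fin 0 → Fin 2) := Pi.uniqueOfIsEmpty _
  rw [Finset.univ_unique, Finset.sum_singleton]
  simp [wordB]

lemma SB_eq_zero {m a : ℕ} (h : m < a) : SB kk m a = 0 := by
  apply Finset.sum_eq_zero; intro f _
  have : (Finset.univ.filter (fun i => f i = 0)).card ≤ m := by
    exact le_trans (Finset.card_filter_le Finset.univ (fun i => f i = 0)) (by simp)
  rw [if_neg (by omega)]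
lemma CB_succ_succ (a b : ℕ) :
    CB kk (a+1) (b+1) = gB kk * CB kk a (b+1) + xB kk * CB kk (a+1) b := by
  rw [CB_eq_SB, CB_eq_SB, CB_eq_SB,
    show (a+1) + (b+1) = ((a+1)+b)+1 by omega, SB_succ_succ,
    show a + (b+1) = (a+1)+b by omega]

lemma CB_zero_left (b : ℕ) : CB kk 0 b = xB kk ^ b := by
  induction b with
  | zero => rw [CB_eq_SB]; exact (SB_zero_zero kk).trans (pow_zero _).symm
  | succ b ih =>
    rw [CB_eq_SB, show 0 + (b+1) = b+1 by omega, SB_succ_zero, pow_succ',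
      show 0 + b = b by omega] at *
    rw [ih]

lemma CB_zero_right (a : ℕ) : CB kk a 0 = gB kk ^ a := by
  induction a with
  | zero => rw [CB_eq_SB]; exact (SB_zero_zero kk).trans (pow_zero _).symm
  | succ a ih =>
    rw [CB_eq_SB] at *
    rw [show a + 1 + 0 = a + 1 by omega, show a + 0 = a by omega] at *
    rw [SB_succ_succ, ih, SB_eq_zero kk (by omega), mul_zero, add_zero, pow_succ']

open TensorProduct in
lemma DeltaB_g : DeltaB kk (gB kk) = gB kk ⊗ₜ[kk] gB kk := by
  rw [DeltaB, gB, FreeAlgebra.lift_ι_apply]; simp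

open TensorProduct in
lemma DeltaB_x : DeltaB kk (xB kk) = xB kk ⊗ₜ[kk] 1 + gB kk ⊗ₜ[kk] xB kk := by
  rw [DeltaB, xB, FreeAlgebra.lift_ι_apply]; simp

open TensorProduct in
lemma DeltaB_SB (m : ℕ) : ∀ a : ℕ, DeltaB kk (SB kk m a)
    = ∑ c ∈ Finset.range (m+1), SB kk m (a+c) ⊗ₜ[kk] SB kk (a+c) a := by
  induction m with
  | zero =>
    intro a
    rw [Finset.sum_range_one]
    match a with
    | 0 => rw [SB_zero_zero]; simp [Algebra.TensorProduct.one_def]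
    | a+1 => rw [SB_eq_zero kk (by omega), map_zero, zero_tmul]
  | succ m ih =>
    intro a
    match a with
    | 0 =>
      rw [SB_succ_zero, map_mul, DeltaB_x, ih]
      simp only [Nat.zero_add]
      have key : ∀ c ∈ Finset.range (m+1),
          SB kk (m+1) (c+1) ⊗ₜ[kk] SB kk (c+1) 0
          = (gB kk ⊗ₜ[kk] xB kk) * (SB kk m c ⊗ₜ[kk] SB kk c 0)
            + (xB kk * SB kk m (c+1)) ⊗ₜ[kk] (xB kk * SB kk c 0) := by
        intro c _
        rw [SB_succ_succ, SB_succ_zero, add_tmul, Algebra.TensorProduct.tmul_mul_tmul]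
      have key2 : (∑ c ∈ Finset.range (m+1),
            (xB kk * SB kk m (c+1)) ⊗ₜ[kk] (xB kk * SB kk c 0))
          + (xB kk * SB kk m 0) ⊗ₜ[kk] SB kk 0 0
          = ∑ c ∈ Finset.range (m+1),
              (xB kk ⊗ₜ[kk] 1) * (SB kk m c ⊗ₜ[kk] SB kk c 0) := by
        conv_rhs => rw [Finset.sum_range_succ']
        rw [Finset.sum_range_succ, SB_eq_zero kk (by omega), mul_zero, zero_tmul, add_zero]
        congr 1
        · refine Finset.sum_congr rfl fun c _ => ?_
          rw [Algebra.TensorProduct.tmul_mul_tmul, one_mul, SB_succ_zero]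
        · rw [Algebra.TensorProduct.tmul_mul_tmul, one_mul]
      rw [add_mul, Finset.mul_sum, Finset.mul_sum]
      conv_rhs => rw [Finset.sum_range_succ' _ (m+1), Finset.sum_congr rfl key, SB_succ_zero]
      rw [Finset.sum_add_distrib, add_assoc, key2]
      exact add_comm _ _
    | a+1 =>
      rw [SB_succ_succ, map_add, map_mul, map_mul, DeltaB_g, DeltaB_x, ih, ih]
      have e1 : ∀ c ∈ Finset.range (m+2),
          SB kk (m+1) (a+1+c) ⊗ₜ[kk] SB kk (a+1+c) (a+1)
          = (gB kk * SB kk m (a+c)) ⊗ₜ[kk] (gB kk * SB kk (a+c) a)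
            + ((gB kk * SB kk m (a+c)) ⊗ₜ[kk] (xB kk * SB kk (a+c) (a+1))
              + (xB kk * SB kk m (a+c+1)) ⊗ₜ[kk]
                  (gB kk * SB kk (a+c) a + xB kk * SB kk (a+c) (a+1))) := by
        intro c _
        rw [show a+1+c = (a+c)+1 by omega, SB_succ_succ, SB_succ_succ, add_tmul,
          tmul_add, add_assoc]
      have hA : (∑ c ∈ Finset.range (m+2),
            (gB kk * SB kk m (a+c)) ⊗ₜ[kk] (gB kk * SB kk (a+c) a))
          = (gB kk ⊗ₜ[kk] gB kk)
            * ∑ c ∈ Finset.range (m+1), SB kk m (a+c) ⊗ₜ[kk] SB kk (a+c) a := by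
        rw [Finset.sum_range_succ, SB_eq_zero kk (show m < a+(m+1) by omega), mul_zero,
          zero_tmul, add_zero, Finset.mul_sum]
        exact Finset.sum_congr rfl fun c _ => by
          rw [Algebra.TensorProduct.tmul_mul_tmul]
      have hB : (∑ c ∈ Finset.range (m+2),
            (gB kk * SB kk m (a+c)) ⊗ₜ[kk] (xB kk * SB kk (a+c) (a+1)))
          = (gB kk ⊗ₜ[kk] xB kk)
            * ∑ c ∈ Finset.range (m+1), SB kk m (a+1+c) ⊗ₜ[kk] SB kk (a+1+c) (a+1) := by
        rw [Finset.sum_range_succ', SB_eq_zero kk (show a+0 < a+1 by omega), mul_zero,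
          tmul_zero, add_zero, Finset.mul_sum]
        exact Finset.sum_congr rfl fun c _ => by
          rw [show a+(c+1) = a+1+c by omega, Algebra.TensorProduct.tmul_mul_tmul]
      have hC : (∑ c ∈ Finset.range (m+2),
            (xB kk * SB kk m (a+c+1)) ⊗ₜ[kk]
              (gB kk * SB kk (a+c) a + xB kk * SB kk (a+c) (a+1)))
          = (xB kk ⊗ₜ[kk] 1)
            * ∑ c ∈ Finset.range (m+1), SB kk m (a+1+c) ⊗ₜ[kk] SB kk (a+1+c) (a+1) := by
        have e2 : ∀ c ∈ Finset.range (m+2),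
            (xB kk * SB kk m (a+c+1)) ⊗ₜ[kk]
              (gB kk * SB kk (a+c) a + xB kk * SB kk (a+c) (a+1))
            = (xB kk * SB kk m (a+c+1)) ⊗ₜ[kk] SB kk (a+1+c) (a+1) := by
          intro c _
          rw [show a+1+c = (a+c)+1 by omega, SB_succ_succ]
        rw [Finset.sum_congr rfl e2, Finset.sum_range_succ,
          SB_eq_zero kk (show m < a+(m+1)+1 by omega), mul_zero, zero_tmul, add_zero,
          Finset.mul_sum]
        exact Finset.sum_congr rfl fun c _ => by
          rw [show a+c+1 = a+1+c by omega, Algebra.TensorProduct.tmul_mul_tmul, one_mul]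
      conv_rhs => rw [Finset.sum_congr rfl e1]
      rw [Finset.sum_add_distrib, Finset.sum_add_distrib, hA, hB, hC, ← add_mul,
        add_comm (gB kk ⊗ₜ[kk] xB kk) (xB kk ⊗ₜ[kk] 1)]
open TensorProduct in
lemma DeltaB_CB (a b : ℕ) : DeltaB kk (CB kk a b)
    = ∑ c ∈ Finset.range (b+1), CB kk (a+c) (b-c) ⊗ₜ[kk] CB kk a c := by
  rw [CB_eq_SB, DeltaB_SB]
  symm
  calc ∑ c ∈ Finset.range (b+1), CB kk (a+c) (b-c) ⊗ₜ[kk] CB kk a c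
      = ∑ c ∈ Finset.range (b+1), SB kk (a+b) (a+c) ⊗ₜ[kk] SB kk (a+c) a := by
        refine Finset.sum_congr rfl fun c hc => ?_
        rw [Finset.mem_range] at hc
        rw [CB_eq_SB, CB_eq_SB, show (a+c) + (b-c) = a+b by omega]
    _ = ∑ c ∈ Finset.range (a+b+1), SB kk (a+b) (a+c) ⊗ₜ[kk] SB kk (a+c) a := by
        refine Finset.sum_subset ?_ ?_
        · intro c hc
          rw [Finset.mem_range] at *
          omega
        · intro c _ hc
          rw [Finset.mem_range] at hc
          rw [SB_eq_zero kk (show a+b < a+c by omega), zero_tmul]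

open TensorProduct in
lemma DeltaB_gpow_CB (i a b : ℕ) : DeltaB kk (gB kk ^ i * CB kk a b)
    = ∑ c ∈ Finset.range (b+1),
        (gB kk ^ i * CB kk (a+c) (b-c)) ⊗ₜ[kk] (gB kk ^ i * CB kk a c) := by
  rw [map_mul, map_pow, DeltaB_g, DeltaB_CB, Finset.mul_sum]
  refine Finset.sum_congr rfl fun c _ => ?_
  rw [Algebra.TensorProduct.tmul_pow, Algebra.TensorProduct.tmul_mul_tmul]

lemma partialSum_zero {n : ℕ} (K : Fin n → ℕ) : partialSum K 0 = 0 := by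
  simp [partialSum]

lemma partialSum_all {n : ℕ} (K : Fin n → ℕ) : partialSum K n = ∑ m, K m := by
  unfold partialSum
  exact Finset.sum_congr rfl fun t _ => if_pos t.is_lt

lemma partialSum_cons {n : ℕ} (c : ℕ) (K : Fin n → ℕ) (m : ℕ) :
    partialSum (Fin.cons c K) (m+1) = c + partialSum K m := by
  unfold partialSum
  rw [Fin.sum_univ_succ]
  simp [Nat.succ_lt_succ_iff]

lemma prod_reverse_succ {M : Type*} [Monoid M] (n : ℕ) (F : Fin (n+1) → M) :
    ((List.finRange (n+1)).reverse.map F).prod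
      = (((List.finRange n).reverse.map (fun m => F m.succ)).prod) * F 0 := by
  rw [List.finRange_succ]
  simp [List.map_reverse, List.map_map, Function.comp_def]
lemma PswB_CB (n i : ℕ) : ∀ a b : ℕ, PswB kk (n+1) (gB kk ^ i * CB kk a b)
    = ∑ K ∈ (Fintype.piFinset fun _ : Fin n => Finset.range (b + 1)).filter
          (fun K => ∑ m, K m ≤ b),
        (gB kk ^ i * CB kk (a + partialSum K n) (b - partialSum K n)) *
          ((List.finRange n).reverse.map
            (fun (m : Fin n) => gB kk ^ i * CB kk (a + partialSum K (m : ℕ)) (K m))).prod := by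
  induction n with
  | zero =>
    intro a b
    have hset : (Fintype.piFinset fun _ : Fin 0 => Finset.range (b + 1)).filter
          (fun K => ∑ m, K m ≤ b) = {fun _ => 0} := by
      apply Finset.eq_singleton_iff_unique_mem.2
      constructor
      · simp only [Finset.mem_filter, Fintype.mem_piFinset]
        exact ⟨fun m => m.elim0, by simp⟩
      · intro K _
        exact funext fun m => m.elim0
    rw [hset, Finset.sum_singleton]
    show gB kk ^ i * CB kk a b = _
    simp [partialSum_zero]
  | succ n ihn =>
    intro a b
    have hunfold : PswB kk (n+1+1) (gB kk ^ i * CB kk a b)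
        = (LinearMap.mul' kk (FreeBi kk))
            (TensorProduct.map (PswB kk (n+1)) LinearMap.id
              (DeltaB kk (gB kk ^ i * CB kk a b))) := rfl
    rw [hunfold, DeltaB_gpow_CB, map_sum, map_sum]
    simp only [TensorProduct.map_tmul, LinearMap.mul'_apply, LinearMap.id_coe, id_eq]
    rw [Finset.sum_congr rfl (fun c (hc : c ∈ Finset.range (b+1)) => by
      rw [ihn (a+c) (b-c), Finset.sum_mul])]
    rw [Finset.sum_sigma']
    refine Finset.sum_nbij' (fun p => Fin.cons p.1 p.2) (fun K => ⟨K 0, Fin.tail K⟩)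
      ?_ ?_ ?_ ?_ ?_
    · rintro ⟨c, K⟩ hp
      simp only [Finset.mem_sigma, Finset.mem_filter, Fintype.mem_piFinset,
        Finset.mem_range] at hp ⊢
      obtain ⟨hc, hK, hsum⟩ := hp
      refine ⟨fun m => ?_, ?_⟩
      · refine Fin.cases ?_ ?_ m
        · simpa using hc
        · intro t
          have := hK t
          simp only [Fin.cons_succ]
          omega
      · rw [Fin.sum_univ_succ]
        simp only [Fin.cons_zero, Fin.cons_succ]
        omega
    · intro K hK
      simp only [Finset.mem_filter, Fintype.mem_piFinset, Finset.mem_range] at hK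
      obtain ⟨hmem, hsum⟩ := hK
      have hs : ∑ m : Fin (n+1), K m = K 0 + ∑ m : Fin n, K m.succ :=
        Fin.sum_univ_succ K
      have h0 : ∀ m : Fin n, K m.succ ≤ ∑ t : Fin n, K t.succ := fun m =>
        Finset.single_le_sum (f := fun t : Fin n => K t.succ) (fun t _ => Nat.zero_le _) (Finset.mem_univ m)
      simp only [Finset.mem_sigma, Finset.mem_filter, Fintype.mem_piFinset,
        Finset.mem_range]
      refine ⟨(by omega : K 0 < b + 1), ⟨fun m => ?_, ?_⟩⟩
      · show Fin.tail K m < b - K 0 + 1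
        have := h0 m
        simp only [Fin.tail]
        omega
      · show ∑ m : Fin n, Fin.tail K m ≤ b - K 0
        simp only [Fin.tail]
        omega
    · rintro ⟨c, K⟩ _
      simp [Fin.tail_cons]
    · intro K _
      exact Fin.cons_self_tail K
    · rintro ⟨c, K⟩ hp
      simp only [Finset.mem_sigma, Finset.mem_filter, Fintype.mem_piFinset,
        Finset.mem_range] at hp
      dsimp only
      rw [prod_reverse_succ]
      simp only [Fin.val_succ, Fin.val_zero, partialSum_cons, Fin.cons_succ, Fin.cons_zero,
        partialSum_zero, Nat.add_zero, ← Nat.add_assoc, Nat.sub_sub]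
      rw [mul_assoc]
/-- `(g^i x^j)^{[n+1]} = Σ_{0 ≤ k_1+⋯+k_n ≤ j}
`g^i C_{k_1+⋯+k_n, j-(k_1+⋯+k_n)} · g^i C_{k_1+⋯+k_{n-1}, k_n} ⋯ g^i C_{k_1,k_2} · g^i C_{0,k_1}`. -/
theorem PswB_g_pow_mul_x_pow (n i j : ℕ) :
    PswB kk (n + 1) (gB kk ^ i * xB kk ^ j) =
      ∑ K ∈ (Fintype.piFinset fun _ : Fin n => Finset.range (j + 1)).filter
          (fun K => ∑ m, K m ≤ j),
        (gB kk ^ i * CB kk (partialSum K n) (j - partialSum K n)) *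
          ((List.finRange n).reverse.map
            (fun (m : Fin n) => gB kk ^ i * CB kk (partialSum K (m : ℕ)) (K m))).prod := by
  rw [show xB kk ^ j = CB kk 0 j from (CB_zero_left kk j).symm, PswB_CB]
  refine Finset.sum_congr rfl fun K _ => ?_
  simp only [Nat.zero_add]
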